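/- Let F be a non-empty totally bounded subset of a uniformly perfect metric space with more than one point, with 0 < dim_A F < ∞ and dim_B_upper F > 0. Then the function θ ↦ dim_θ_upper F / θ is strictly decreasing on (0,1]. -/

import Mathlib

open Metric Set Filter MeasureTheory Topology

/-- A metric space is `c`-uniformly perfect for some `c ∈ (0,1)`:
for all `x` and `0 < R < diam X`, `B(x,R) \ B(x,cR) ≠ ∅`. -/
def UniformlyPerfect (X : Type*) [MetricSpace X] : Prop :=
  ∃ c : ℝ, 0 < c ∧ c < 1 ∧ ∀ (x : X) (R : ℝ), 0 < R →
    ENNReal.ofReal R < EMetric.diam (Set.univ : Set X) →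
    ∃ y : X, dist x y < R ∧ c * R ≤ dist x y

/-- `Φ` is admissible: on some interval `(0,Y)` it satisfies `0 < Φ(δ) ≤ δ`,
`Φ(δ)/δ → 0` as `δ → 0⁺`, and `Φ` is monotonic on `(0,Y)`. -/
def Admissible (Φ : ℝ → ℝ) : Prop :=
  ∃ Y : ℝ, 0 < Y ∧ (∀ δ ∈ Set.Ioo (0:ℝ) Y, 0 < Φ δ ∧ Φ δ ≤ δ) ∧
    Filter.Tendsto (fun δ => Φ δ / δ) (nhdsWithin 0 (Set.Ioi 0)) (nhds 0) ∧
    (MonotoneOn Φ (Set.Ioo 0 Y) ∨ AntitoneOn Φ (Set.Ioo 0 Y))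

/-- There is a (finite) cover of `F` by sets of diameter in `[Φ(δ), δ]`
whose `s`-diameter sum is at most `ε`. -/
def CoverSum {X : Type*} [MetricSpace X] (Φ : ℝ → ℝ) (s ε δ : ℝ) (F : Set X) : Prop :=
  ∃ (n : ℕ) (U : Fin n → Set X), F ⊆ ⋃ i, U i ∧
    (∀ i, Φ δ ≤ Metric.diam (U i) ∧ Metric.diam (U i) ≤ δ) ∧
    ∑ i, Metric.diam (U i) ^ s ≤ ε

/-- The upper `Φ`-intermediate dimension. -/
noncomputable def upperPhiDim {X : Type*} [MetricSpace X] (Φ : ℝ → ℝ) (F : Set X) : ℝ :=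
  sInf {s : ℝ | 0 ≤ s ∧ ∀ ε : ℝ, 0 < ε → ∃ δ₀ ∈ Set.Ioc (0:ℝ) 1,
    ∀ δ ∈ Set.Ioo (0:ℝ) δ₀, CoverSum Φ s ε δ F}

/-- The lower `Φ`-intermediate dimension. -/
noncomputable def lowerPhiDim {X : Type*} [MetricSpace X] (Φ : ℝ → ℝ) (F : Set X) : ℝ :=
  sInf {s : ℝ | 0 ≤ s ∧ ∀ ε : ℝ, 0 < ε → ∀ δ₀ ∈ Set.Ioc (0:ℝ) 1,
    ∃ δ ∈ Set.Ioo (0:ℝ) δ₀, CoverSum Φ s ε δ F}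

/-- The smallest number of sets of diameter at most `δ` needed to cover `F`. -/
noncomputable def coverNum {X : Type*} [MetricSpace X] (F : Set X) (δ : ℝ) : ℕ :=
  sInf {n : ℕ | ∃ U : Fin n → Set X, F ⊆ ⋃ i, U i ∧ ∀ i, Metric.diam (U i) ≤ δ}

/-- Upper box (Minkowski) dimension. -/
noncomputable def upperBoxDim {X : Type*} [MetricSpace X] (F : Set X) : ℝ :=
  Filter.limsup (fun δ : ℝ => Real.log (coverNum F δ) / -Real.log δ)
    (nhdsWithin 0 (Set.Ioi 0))

/-- Lower box (Minkowski) dimension. -/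
noncomputable def lowerBoxDim {X : Type*} [MetricSpace X] (F : Set X) : ℝ :=
  Filter.liminf (fun δ : ℝ => Real.log (coverNum F δ) / -Real.log δ)
    (nhdsWithin 0 (Set.Ioi 0))

/-- `α` witnesses the Assouad dimension bound for `F`. -/
def IsAssouadBound {X : Type*} [MetricSpace X] (F : Set X) (α : ℝ) : Prop :=
  0 ≤ α ∧ ∃ C : ℝ, 0 < C ∧ ∀ x ∈ F, ∀ r R : ℝ, 0 < r → r < R →
    (coverNum (Metric.ball x R ∩ F) r : ℝ) ≤ C * (R / r) ^ α

/-- The Assouad dimension (junk value `0` if no bound exists). -/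
noncomputable def assouadDim {X : Type*} [MetricSpace X] (F : Set X) : ℝ :=
  sInf {α : ℝ | IsAssouadBound F α}

/-- The upper `θ`-intermediate dimension: Hausdorff dimension at `θ = 0`,
upper box dimension at `θ = 1`, and `upperPhiDim` with `Φ(δ) = δ^(1/θ)` in between. -/
noncomputable def upperThetaDim {X : Type*} [MetricSpace X] (θ : ℝ) (F : Set X) : ℝ :=
  if θ = 0 then (dimH F).toReal
  else if θ = 1 then upperBoxDim F
  else upperPhiDim (fun δ => δ ^ (1/θ)) F

/-- The lower `θ`-intermediate dimension. -/
noncomputable def lowerThetaDim {X : Type*} [MetricSpace X] (θ : ℝ) (F : Set X) : ℝ :=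
  if θ = 0 then (dimH F).toReal
  else if θ = 1 then lowerBoxDim F
  else lowerPhiDim (fun δ => δ ^ (1/θ)) F
section Aux

variable {X : Type*} [MetricSpace X]

/-- Extract a `δ₀ ∈ (0,1]` window from an eventually-statement on `𝓝[>] 0`. -/
lemma exists_delta_of_eventually {P : ℝ → Prop}
    (h : ∀ᶠ δ in nhdsWithin (0:ℝ) (Set.Ioi 0), P δ) :
    ∃ δ₀ ∈ Set.Ioc (0:ℝ) 1, ∀ δ ∈ Set.Ioo (0:ℝ) δ₀, P δ := by
  obtain ⟨u, hu, hsub⟩ := mem_nhdsGT_iff_exists_Ioo_subset.1 h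
  refine ⟨min u 1, ⟨lt_min hu one_pos, min_le_right _ _⟩, fun δ hδ => ?_⟩
  exact hsub ⟨hδ.1, lt_of_lt_of_le hδ.2 (min_le_left _ _)⟩

lemma eventually_of_delta {P : ℝ → Prop} {δ₀ : ℝ} (h0 : 0 < δ₀)
    (h : ∀ δ ∈ Set.Ioo (0:ℝ) δ₀, P δ) :
    ∀ᶠ δ in nhdsWithin (0:ℝ) (Set.Ioi 0), P δ := by
  rw [eventually_iff, mem_nhdsGT_iff_exists_Ioo_subset]
  exact ⟨δ₀, h0, fun δ hδ => h δ hδ⟩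

lemma coverNum_setOf_nonempty {S : Set X} (hS : TotallyBounded S) {δ : ℝ} (hδ : 0 < δ) :
    {n : ℕ | ∃ U : Fin n → Set X, S ⊆ ⋃ i, U i ∧ ∀ i, Metric.diam (U i) ≤ δ}.Nonempty := by
  rw [Metric.totallyBounded_iff] at hS
  obtain ⟨t, htf, hcov⟩ := hS (δ/2) (by linarith)
  lift t to Finset X using htf
  refine ⟨t.card, fun i => Metric.ball (t.equivFin.symm i : X) (δ/2), ?_, fun i => ?_⟩
  · intro x hx
    obtain ⟨y, hy, hxy⟩ := Set.mem_iUnion₂.1 (hcov hx)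
    exact Set.mem_iUnion.2 ⟨t.equivFin ⟨y, hy⟩, by simpa using hxy⟩
  · calc Metric.diam (Metric.ball _ (δ/2)) ≤ 2 * (δ/2) := Metric.diam_ball (by linarith)
    _ = δ := by ring

lemma coverNum_realize {S : Set X} (hS : TotallyBounded S) {δ : ℝ} (hδ : 0 < δ) :
    ∃ U : Fin (coverNum S δ) → Set X, S ⊆ ⋃ i, U i ∧ ∀ i, Metric.diam (U i) ≤ δ :=
  Nat.sInf_mem (coverNum_setOf_nonempty hS hδ)

lemma coverNum_le_card {S : Set X} {δ : ℝ} {n : ℕ} (U : Fin n → Set X)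
    (hc : S ⊆ ⋃ i, U i) (hd : ∀ i, Metric.diam (U i) ≤ δ) : coverNum S δ ≤ n :=
  Nat.sInf_le ⟨U, hc, hd⟩

lemma one_le_coverNum {S : Set X} (hS : S.Nonempty) (δ : ℝ) (hTB : TotallyBounded S)
    (hδ : 0 < δ) : 1 ≤ coverNum S δ := by
  rcases Nat.eq_zero_or_pos (coverNum S δ) with h | h
  · exfalso
    obtain ⟨U, hc, -⟩ := coverNum_realize hTB hδ
    obtain ⟨x, hx⟩ := hS
    obtain ⟨i, -⟩ := Set.mem_iUnion.1 (hc hx)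
    rw [h] at i
    exact i.elim0
  · exact h

lemma coverSum_of_fintype {Φ : ℝ → ℝ} {s ε δ : ℝ} {F : Set X}
    {I : Type} [Fintype I] (U : I → Set X) (hc : F ⊆ ⋃ i, U i)
    (hd : ∀ i, Φ δ ≤ Metric.diam (U i) ∧ Metric.diam (U i) ≤ δ)
    (hs : ∑ i, Metric.diam (U i) ^ s ≤ ε) : CoverSum Φ s ε δ F := by
  refine ⟨Fintype.card I, fun j => U ((Fintype.equivFin I).symm j), ?_, fun j => hd _, ?_⟩
  · rw [(Fintype.equivFin I).symm.surjective.iUnion_comp (fun i => U i)]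
    exact hc
  · rw [Equiv.sum_comp (Fintype.equivFin I).symm (fun i => Metric.diam (U i) ^ s)]
    exact hs

end Aux
section Aux2

variable {X : Type*} [MetricSpace X]

lemma exists_small_lt_diam [Nontrivial X] :
    ∃ ε₀ : ℝ, 0 < ε₀ ∧ ENNReal.ofReal ε₀ < EMetric.diam (Set.univ : Set X) := by
  obtain ⟨x, y, hxy⟩ := exists_pair_ne X
  have hpos : 0 < EMetric.diam (Set.univ : Set X) :=
    lt_of_lt_of_le (by simpa [edist_pos] using hxy)
      (EMetric.edist_le_diam_of_mem (Set.mem_univ x) (Set.mem_univ y))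
  rcases eq_or_ne (EMetric.diam (Set.univ : Set X)) ⊤ with h | h
  · exact ⟨1, one_pos, by simp [h]⟩
  · refine ⟨(EMetric.diam (Set.univ : Set X)).toReal / 2, ?_, ?_⟩
    · have := ENNReal.toReal_pos hpos.ne' h
      linarith
    · have := ENNReal.toReal_pos hpos.ne' h
      rw [ENNReal.ofReal_lt_iff_lt_toReal (by linarith) h]
      linarith

/-- The fattening lemma: any nonempty set of diameter at most `Δ` can be enlarged to
a set of diameter between `Δ^p` and `Δ`. -/
lemma exists_fatten [Nontrivial X] (hbX : Bornology.IsBounded (Set.univ : Set X))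
    {c : ℝ} (hc0 : 0 < c) (hc1 : c < 1)
    (hup : ∀ (x : X) (R : ℝ), 0 < R → ENNReal.ofReal R < EMetric.diam (Set.univ : Set X) →
      ∃ y : X, dist x y < R ∧ c * R ≤ dist x y)
    {p : ℝ} (hp : 1 < p) :
    ∃ Δ₁ ∈ Set.Ioc (0:ℝ) 1, ∀ Δ ∈ Set.Ioo (0:ℝ) Δ₁, ∀ V : Set X, V.Nonempty →
      Metric.diam V ≤ Δ → ∃ W : Set X, V ⊆ W ∧ Δ^p ≤ Metric.diam W ∧
        Metric.diam W ≤ Δ ∧ Metric.diam W ≤ max (Metric.diam V) ((1+1/c) * Δ^p) := by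
  obtain ⟨ε₀, hε₀, hε₀d⟩ := exists_small_lt_diam (X := X)
  set b₁ : ℝ := (c/(c+1)) ^ (1/(p-1)) with hb₁
  have hb₁pos : 0 < b₁ := Real.rpow_pos_of_pos (by positivity) _
  refine ⟨min 1 (min b₁ (c * ε₀)), ⟨by positivity, min_le_left _ _⟩, ?_⟩
  rintro Δ ⟨hΔ0, hΔ1⟩ V hVne hVd
  have hΔlt1 : Δ < 1 := lt_of_lt_of_le hΔ1 (min_le_left _ _)
  have hΔb₁ : Δ < b₁ := lt_of_lt_of_le hΔ1 (le_trans (min_le_right _ _) (min_le_left _ _))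
  have hΔcε : Δ < c * ε₀ := lt_of_lt_of_le hΔ1 (le_trans (min_le_right _ _) (min_le_right _ _))
  have hΔp_pos : 0 < Δ ^ p := Real.rpow_pos_of_pos hΔ0 _
  have hΔp_le : Δ ^ p ≤ Δ := by
    calc Δ ^ p ≤ Δ ^ (1:ℝ) :=
          Real.rpow_le_rpow_of_exponent_ge hΔ0 hΔlt1.le hp.le
    _ = Δ := Real.rpow_one Δ
  -- key smallness: (1+1/c) * Δ^p ≤ Δ
  have hkey : (1 + 1/c) * Δ ^ p ≤ Δ := by
    have h1 : Δ ^ (p-1) ≤ c/(c+1) := by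
      calc Δ ^ (p-1) ≤ b₁ ^ (p-1) :=
            Real.rpow_le_rpow hΔ0.le hΔb₁.le (by linarith)
      _ = c/(c+1) := by
            rw [hb₁, ← Real.rpow_mul (by positivity), one_div,
              inv_mul_cancel₀ (by linarith : p - 1 ≠ 0), Real.rpow_one]
    have h2 : Δ ^ p = Δ ^ (p-1) * Δ := by
      rw [← Real.rpow_add_one hΔ0.ne' (p-1)]; ring_nf
    have h3 : (1 + 1/c) * (c/(c+1)) = 1 := by field_simp
    calc (1 + 1/c) * Δ ^ p = ((1 + 1/c) * Δ ^ (p-1)) * Δ := by rw [h2]; ring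
    _ ≤ ((1 + 1/c) * (c/(c+1))) * Δ := by
          have : (1+1/c) * Δ ^ (p-1) ≤ (1+1/c) * (c/(c+1)) := by
            apply mul_le_mul_of_nonneg_left h1 (by positivity)
          exact mul_le_mul_of_nonneg_right this hΔ0.le
    _ = Δ := by rw [h3, one_mul]
  rcases le_or_gt (Δ ^ p) (Metric.diam V) with hbig | hsmall
  · exact ⟨V, subset_rfl, hbig, hVd, le_max_left _ _⟩
  · obtain ⟨x, hx⟩ := hVne
    set R : ℝ := Δ ^ p / c with hR
    have hR0 : 0 < R := by positivity
    have hRε : R < ε₀ := by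
      rw [hR, div_lt_iff₀ hc0] at *
      calc Δ ^ p ≤ Δ := hΔp_le
      _ < c * ε₀ := hΔcε
      _ = ε₀ * c := by ring
    obtain ⟨y, hy1, hy2⟩ := hup x R hR0
      (lt_trans ((ENNReal.ofReal_lt_ofReal_iff hε₀).2 hRε) hε₀d)
    refine ⟨V ∪ {y}, Set.subset_union_left, ?_, ?_, ?_⟩
    · calc Δ ^ p = c * R := by rw [hR]; field_simp
      _ ≤ dist x y := hy2
      _ ≤ Metric.diam (V ∪ {y}) :=
          Metric.dist_le_diam_of_mem (hbX.subset (Set.subset_univ _))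
            (Set.mem_union_left _ hx) (Set.mem_union_right _ rfl)
    · calc Metric.diam (V ∪ {y}) ≤ Metric.diam V + dist x y + Metric.diam {y} :=
            Metric.diam_union hx rfl
      _ = Metric.diam V + dist x y := by rw [Metric.diam_singleton]; ring
      _ ≤ Δ ^ p + R := by
            have := hy1.le
            linarith [hsmall.le]
      _ = (1 + 1/c) * Δ ^ p := by rw [hR]; field_simp
      _ ≤ Δ := hkey
    · calc Metric.diam (V ∪ {y}) ≤ Metric.diam V + dist x y + Metric.diam {y} :=
            Metric.diam_union hx rfl
      _ = Metric.diam V + dist x y := by rw [Metric.diam_singleton]; ring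
      _ ≤ Δ ^ p + R := by linarith [hsmall.le, hy1.le]
      _ = (1 + 1/c) * Δ ^ p := by rw [hR]; field_simp
      _ ≤ max (Metric.diam V) ((1+1/c) * Δ ^ p) := le_max_right _ _

lemma bounded_of_upperBoxDim_pos {F : Set X} (h : 0 < upperBoxDim F) :
    Bornology.IsBounded (Set.univ : Set X) := by
  by_contra hb
  have h1 : ∀ δ : ℝ, 0 < δ → coverNum F δ ≤ 1 := by
    intro δ hδ
    refine coverNum_le_card (fun _ : Fin 1 => Set.univ) (fun x _ => Set.mem_iUnion.2 ⟨0, trivial⟩) (fun i => ?_)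
    rw [Metric.diam_eq_zero_of_unbounded hb]
    exact hδ.le
  have h2 : ∀ᶠ δ in nhdsWithin (0:ℝ) (Set.Ioi 0),
      Real.log (coverNum F δ) / -Real.log δ = 0 := by
    apply eventually_of_delta one_pos
    intro δ hδ
    have := h1 δ hδ.1
    interval_cases h : coverNum F δ <;> simp
  have : upperBoxDim F = 0 := by
    rw [upperBoxDim, Filter.limsup_congr h2, Filter.limsup_const]
  rw [this] at h
  exact lt_irrefl 0 h

end Aux2
section WSetSec

variable {X : Type*} [MetricSpace X]

/-- The set of exponents witnessing the upper `θ`-intermediate dimension. -/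
def WSet (θ : ℝ) (F : Set X) : Set ℝ :=
  {s : ℝ | 0 ≤ s ∧ ∀ ε : ℝ, 0 < ε → ∃ δ₀ ∈ Set.Ioc (0:ℝ) 1,
    ∀ δ ∈ Set.Ioo (0:ℝ) δ₀, CoverSum (fun δ => δ ^ (1/θ)) s ε δ F}

lemma upperPhiDim_eq_sInf (θ : ℝ) (F : Set X) :
    upperPhiDim (fun δ => δ ^ (1/θ)) F = sInf (WSet θ F) := rfl

lemma WSet_upward {θ s s' : ℝ} {F : Set X} (h : s ∈ WSet θ F) (hss' : s ≤ s') :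
    s' ∈ WSet θ F := by
  refine ⟨le_trans h.1 hss', fun ε hε => ?_⟩
  obtain ⟨δ₀, hδ₀, hcs⟩ := h.2 ε hε
  refine ⟨δ₀, hδ₀, fun δ hδ => ?_⟩
  obtain ⟨n, U, hc, hd, hsum⟩ := hcs δ hδ
  refine ⟨n, U, hc, hd, le_trans (Finset.sum_le_sum fun i _ => ?_) hsum⟩
  have hpos : 0 < Metric.diam (U i) :=
    lt_of_lt_of_le (Real.rpow_pos_of_pos hδ.1 (1/θ)) (hd i).1
  have h1 : Metric.diam (U i) ≤ 1 := le_trans (hd i).2 (le_trans hδ.2.le hδ₀.2)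
  exact Real.rpow_le_rpow_of_exponent_ge hpos h1 hss'

lemma mem_WSet_of_lt {θ s : ℝ} {F : Set X} (hne : (WSet θ F).Nonempty)
    (h : sInf (WSet θ F) < s) : s ∈ WSet θ F := by
  obtain ⟨a, ha, has⟩ := exists_lt_of_csInf_lt hne h
  exact WSet_upward ha has.le

lemma sInf_WSet_nonneg {θ : ℝ} {F : Set X} (hne : (WSet θ F).Nonempty) :
    0 ≤ sInf (WSet θ F) :=
  le_csInf hne fun _ hb => hb.1

lemma IsAssouadBound.mono {F : Set X} {α α' : ℝ} (h : IsAssouadBound F α)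
    (hαα' : α ≤ α') : IsAssouadBound F α' := by
  obtain ⟨hα0, C, hC, hb⟩ := h
  refine ⟨le_trans hα0 hαα', C, hC, fun x hx r R hr hrR => ?_⟩
  refine le_trans (hb x hx r R hr hrR) ?_
  have h1 : (1:ℝ) ≤ R / r := (one_le_div hr).2 hrR.le
  exact mul_le_mul_of_nonneg_left (Real.rpow_le_rpow_of_exponent_le h1 hαα') hC.le

lemma WSet_nonempty [Nontrivial X] (hbX : Bornology.IsBounded (Set.univ : Set X))
    {c : ℝ} (hc0 : 0 < c) (hc1 : c < 1)
    (hup : ∀ (x : X) (R : ℝ), 0 < R → ENNReal.ofReal R < EMetric.diam (Set.univ : Set X) →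
      ∃ y : X, dist x y < R ∧ c * R ≤ dist x y)
    {F : Set X} (hne : F.Nonempty) (hTB : TotallyBounded F)
    {α C : ℝ} (hα : 0 ≤ α) (hC : 0 < C)
    (hb : ∀ x ∈ F, ∀ r R : ℝ, 0 < r → r < R →
      (coverNum (Metric.ball x R ∩ F) r : ℝ) ≤ C * (R / r) ^ α)
    {θ : ℝ} (hθ0 : 0 < θ) (hθ1 : θ < 1) : (α + 1) ∈ WSet θ F := by
  classical
  have hp : 1 < 1/θ := one_lt_one_div hθ0 hθ1
  obtain ⟨Δ₁, hΔ₁, hfat⟩ := exists_fatten hbX hc0 hc1 hup hp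
  obtain ⟨x₀, hx₀⟩ := hne
  set R₀ : ℝ := Metric.diam F + 1 with hR₀def
  have hR₀1 : 1 ≤ R₀ := by
    have := Metric.diam_nonneg (s := F); linarith
  have hR₀0 : 0 < R₀ := by linarith
  have hFb : Metric.ball x₀ R₀ ∩ F = F := by
    rw [Set.inter_eq_right]
    intro f hf
    have : dist f x₀ ≤ Metric.diam F :=
      Metric.dist_le_diam_of_mem (hbX.subset (Set.subset_univ _)) hf hx₀
    rw [Metric.mem_ball]; linarith
  set K : ℝ := C * R₀ ^ α with hKdef
  have hK0 : 0 < K := by positivity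
  refine ⟨by positivity, fun ε hε => ?_⟩
  refine ⟨min Δ₁ (ε / K), ⟨lt_min hΔ₁.1 (by positivity), le_trans (min_le_left _ _) hΔ₁.2⟩,
    fun δ hδ => ?_⟩
  have hδ0 : 0 < δ := hδ.1
  have hδΔ₁ : δ < Δ₁ := lt_of_lt_of_le hδ.2 (min_le_left _ _)
  have hδεK : δ < ε / K := lt_of_lt_of_le hδ.2 (min_le_right _ _)
  have hδ1 : δ < 1 := lt_of_lt_of_le hδΔ₁ hΔ₁.2
  obtain ⟨P, hPc, hPd⟩ := coverNum_realize hTB hδ0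
  set P' : Fin (coverNum F δ) → Set X := fun j => if (P j).Nonempty then P j else {x₀} with hP'
  have hP'ne : ∀ j, (P' j).Nonempty := by
    intro j; rw [hP']; dsimp only
    split_ifs with h
    · exact h
    · exact ⟨x₀, rfl⟩
  have hP'd : ∀ j, Metric.diam (P' j) ≤ δ := by
    intro j; rw [hP']; dsimp only
    split_ifs with h
    · exact hPd j
    · rw [Metric.diam_singleton]; exact hδ0.le
  have hP'c : F ⊆ ⋃ j, P' j := by
    intro x hx
    obtain ⟨j, hj⟩ := Set.mem_iUnion.1 (hPc hx)
    refine Set.mem_iUnion.2 ⟨j, ?_⟩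
    rw [hP']; dsimp only
    rw [if_pos ⟨x, hj⟩]; exact hj
  choose W hW1 hW2 hW3 hW4 using fun j => hfat δ ⟨hδ0, hδΔ₁⟩ (P' j) (hP'ne j) (hP'd j)
  refine coverSum_of_fintype W (fun x hx => ?_) (fun j => ⟨hW2 j, hW3 j⟩) ?_
  · obtain ⟨j, hj⟩ := Set.mem_iUnion.1 (hP'c hx)
    exact Set.mem_iUnion.2 ⟨j, hW1 j hj⟩
  · have hsum : ∑ j : Fin (coverNum F δ), Metric.diam (W j) ^ (α+1) ≤ (coverNum F δ : ℝ) * δ ^ (α+1) := by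
      calc ∑ j : Fin (coverNum F δ), Metric.diam (W j) ^ (α+1)
          ≤ ∑ _j : Fin (coverNum F δ), δ ^ (α+1) :=
            Finset.sum_le_sum fun j _ =>
              Real.rpow_le_rpow Metric.diam_nonneg (hW3 j) (by positivity)
      _ = (coverNum F δ : ℝ) * δ ^ (α+1) := by
            rw [Finset.sum_const, Finset.card_univ, Fintype.card_fin, nsmul_eq_mul]
    have hNle : (coverNum F δ : ℝ) ≤ C * (R₀/δ) ^ α := by
      have := hb x₀ hx₀ δ R₀ hδ0 (lt_of_lt_of_le hδ1 hR₀1)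
      rwa [hFb] at this
    have halg : C * (R₀/δ) ^ α * δ ^ (α+1) = K * δ := by
      have hδα : δ ^ α ≠ 0 := by positivity
      rw [Real.div_rpow hR₀0.le hδ0.le, hKdef, Real.rpow_add_one hδ0.ne']
      field_simp
    calc ∑ j : Fin (coverNum F δ), Metric.diam (W j) ^ (α+1) ≤ (coverNum F δ : ℝ) * δ ^ (α+1) := hsum
    _ ≤ C * (R₀/δ) ^ α * δ ^ (α+1) :=
        mul_le_mul_of_nonneg_right hNle (by positivity)
    _ = K * δ := halg
    _ ≤ K * (ε / K) := mul_le_mul_of_nonneg_left hδεK.le hK0.le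
    _ = ε := by field_simp

end WSetSec
section Transfer

variable {X : Type*} [MetricSpace X]

lemma chop (hbX : Bornology.IsBounded (Set.univ : Set X)) {F : Set X}
    (hTB : TotallyBounded F) {C α : ℝ}
    (hb : ∀ x ∈ F, ∀ r R : ℝ, 0 < r → r < R →
      (coverNum (Metric.ball x R ∩ F) r : ℝ) ≤ C * (R / r) ^ α)
    {U : Set X} {x : X} (hx : x ∈ U ∩ F) {Δ : ℝ} (hΔ0 : 0 < Δ)
    (hd : Δ < Metric.diam U) :
    ∃ (N : ℕ) (P : Fin N → Set X), (U ∩ F) ⊆ ⋃ j, P j ∧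
      (∀ j, Metric.diam (P j) ≤ Δ) ∧ (N:ℝ) ≤ C * (2 * Metric.diam U / Δ) ^ α := by
  have hdU : 0 < Metric.diam U := lt_trans hΔ0 hd
  set R : ℝ := 2 * Metric.diam U with hR
  have hsub : U ∩ F ⊆ Metric.ball x R ∩ F := by
    rintro u ⟨hu1, hu2⟩
    refine ⟨?_, hu2⟩
    rw [Metric.mem_ball]
    calc dist u x ≤ Metric.diam U :=
          Metric.dist_le_diam_of_mem (hbX.subset (Set.subset_univ _)) hu1 hx.1
    _ < R := by rw [hR]; linarith
  have hTB' : TotallyBounded (Metric.ball x R ∩ F) :=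
    hTB.subset Set.inter_subset_right
  obtain ⟨P, hPc, hPd⟩ := coverNum_realize hTB' hΔ0
  refine ⟨coverNum (Metric.ball x R ∩ F) Δ, P, fun u hu => hPc (hsub hu), hPd, ?_⟩
  exact hb x hx.2 Δ R hΔ0 (by rw [hR]; linarith)

lemma transfer_lt_one [Nontrivial X] (hbX : Bornology.IsBounded (Set.univ : Set X))
    {c : ℝ} (hc0 : 0 < c) (hc1 : c < 1)
    (hup : ∀ (x : X) (R : ℝ), 0 < R → ENNReal.ofReal R < EMetric.diam (Set.univ : Set X) →
      ∃ y : X, dist x y < R ∧ c * R ≤ dist x y)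
    {F : Set X} (hne : F.Nonempty) (hTB : TotallyBounded F)
    {C α : ℝ} (hC : 0 < C)
    (hb : ∀ x ∈ F, ∀ r R : ℝ, 0 < r → r < R →
      (coverNum (Metric.ball x R ∩ F) r : ℝ) ≤ C * (R / r) ^ α)
    {θ φ s t m : ℝ} (hθ0 : 0 < θ) (hθφ : θ < φ) (hφ1 : φ < 1)
    (hm0 : 0 < m) (hm1 : m ≤ 1) (hs0 : 0 ≤ s) (hsα : s ≤ α) (hts : s ≤ t)
    (h2 : m * s * φ ≤ t * θ) (h3 : α - m * (α - s) ≤ t)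
    (hsW : s ∈ WSet θ F) : t ∈ WSet φ F := by
  classical
  have hφ0 : 0 < φ := hθ0.trans hθφ
  have hp : 1 < 1/φ := one_lt_one_div hφ0 hφ1
  obtain ⟨Δ₁, hΔ₁, hfat⟩ := exists_fatten hbX hc0 hc1 hup hp
  obtain ⟨x₀, hx₀⟩ := hne
  have ht0 : 0 ≤ t := le_trans hs0 hts
  set κ : ℝ := (1 + 1/c) ^ t with hκdef
  have hκ0 : 0 < κ := Real.rpow_pos_of_pos (by positivity) _
  set K : ℝ := 1 + κ + C * 2 ^ α with hKdef
  have h2α : (0:ℝ) < 2 ^ α := Real.rpow_pos_of_pos two_pos _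
  have hK0 : 0 < K := by positivity
  refine ⟨ht0, fun ε' hε' => ?_⟩
  obtain ⟨δ₀, hδ₀, hcs⟩ := hsW.2 (ε'/K) (by positivity)
  have hδ₀m : (0:ℝ) < δ₀ ^ (1/m) := Real.rpow_pos_of_pos hδ₀.1 _
  refine ⟨min Δ₁ (δ₀ ^ (1/m)),
    ⟨lt_min hΔ₁.1 hδ₀m, le_trans (min_le_left _ _) hΔ₁.2⟩, fun Δ hΔ => ?_⟩
  have hΔ0 : 0 < Δ := hΔ.1
  have hΔΔ₁ : Δ < Δ₁ := lt_of_lt_of_le hΔ.2 (min_le_left _ _)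
  have hΔ1 : Δ < 1 := lt_of_lt_of_le hΔΔ₁ hΔ₁.2
  have hΔδ₀ : Δ < δ₀ ^ (1/m) := lt_of_lt_of_le hΔ.2 (min_le_right _ _)
  set δ : ℝ := Δ ^ m with hδdef
  have hδ0 : 0 < δ := Real.rpow_pos_of_pos hΔ0 _
  have hδ1 : δ < 1 := Real.rpow_lt_one hΔ0.le hΔ1 hm0
  have hδδ₀ : δ < δ₀ := by
    calc δ = Δ ^ m := hδdef
    _ < (δ₀ ^ (1/m)) ^ m := Real.rpow_lt_rpow hΔ0.le hΔδ₀ hm0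
    _ = δ₀ := by
        rw [← Real.rpow_mul hδ₀.1.le, one_div, inv_mul_cancel₀ hm0.ne', Real.rpow_one]
  obtain ⟨n, U, hc, hd, hsum⟩ := hcs δ ⟨hδ0, hδδ₀⟩
  have hdpos : ∀ i, 0 < Metric.diam (U i) :=
    fun i => lt_of_lt_of_le (Real.rpow_pos_of_pos hδ0 _) (hd i).1
  have hdle : ∀ i, Metric.diam (U i) ≤ δ := fun i => (hd i).2
  -- the per-piece cost bound
  have key : ∀ i : Fin n, ∃ (k : ℕ) (V : Fin k → Set X),
      (U i ∩ F ⊆ ⋃ j, V j) ∧ (∀ j, Δ^(1/φ) ≤ Metric.diam (V j) ∧ Metric.diam (V j) ≤ Δ) ∧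
      ∑ j, Metric.diam (V j) ^ t ≤
        Metric.diam (U i) ^ t + κ * Δ^(t/φ)
          + C * 2^α * Metric.diam (U i) ^ α * Δ^(t-α) := by
    intro i
    have hT1 : 0 ≤ Metric.diam (U i) ^ t := Real.rpow_nonneg Metric.diam_nonneg t
    have hT2 : 0 ≤ κ * Δ^(t/φ) := by positivity
    have hT3 : 0 ≤ C * 2^α * Metric.diam (U i) ^ α * Δ^(t-α) := by
      have := Metric.diam_nonneg (s := U i); positivity
    have hmaxb : ∀ V : Set X, Metric.diam V ≤ max (Metric.diam (U i)) ((1+1/c) * Δ^(1/φ)) →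
        Metric.diam V ^ t ≤ Metric.diam (U i) ^ t + κ * Δ^(t/φ) := by
      intro V hV
      have hb1 : ((1+1/c) * Δ^(1/φ)) ^ t = κ * Δ^(t/φ) := by
        rw [Real.mul_rpow (by positivity) (Real.rpow_nonneg hΔ0.le _), hκdef,
          ← Real.rpow_mul hΔ0.le]
        rw [show 1/φ * t = t/φ by ring]
      rcases max_cases (Metric.diam (U i)) ((1+1/c) * Δ^(1/φ)) with ⟨hm, -⟩ | ⟨hm, -⟩
      · rw [hm] at hV
        have : Metric.diam V ^ t ≤ Metric.diam (U i) ^ t :=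
          Real.rpow_le_rpow Metric.diam_nonneg hV ht0
        linarith
      · rw [hm] at hV
        have : Metric.diam V ^ t ≤ ((1+1/c) * Δ^(1/φ)) ^ t :=
          Real.rpow_le_rpow Metric.diam_nonneg hV ht0
        rw [hb1] at this
        linarith
    by_cases hUF : (U i ∩ F).Nonempty
    · rcases le_or_gt (Metric.diam (U i)) Δ with hsmall | hbig
      · obtain ⟨W, hW1, hW2, hW3, hW4⟩ := hfat Δ ⟨hΔ0, hΔΔ₁⟩ (U i)
          (Set.nonempty_iff_ne_empty.2 (fun hE => by
            have h' := hdpos i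
            rw [hE, Metric.diam_empty] at h'
            exact lt_irrefl 0 h')) hsmall
        refine ⟨1, fun _ => W, ?_, fun j => ⟨hW2, hW3⟩, ?_⟩
        · intro u hu; exact Set.mem_iUnion.2 ⟨0, hW1 hu.1⟩
        · rw [Finset.sum_const, Finset.card_univ, Fintype.card_fin, one_nsmul]
          have := hmaxb W hW4
          linarith
      · obtain ⟨xU, hxU⟩ := hUF
        obtain ⟨N, P, hPc, hPd, hPb⟩ := chop hbX hTB hb hxU hΔ0 hbig
        set P' : Fin N → Set X := fun j => if (P j).Nonempty then P j else {xU} with hP'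
        have hP'ne : ∀ j, (P' j).Nonempty := by
          intro j; rw [hP']; dsimp only
          split_ifs with h
          · exact h
          · exact ⟨xU, rfl⟩
        have hP'd : ∀ j, Metric.diam (P' j) ≤ Δ := by
          intro j; rw [hP']; dsimp only
          split_ifs with h
          · exact hPd j
          · rw [Metric.diam_singleton]; exact hΔ0.le
        choose W hW1 hW2 hW3 hW4 using fun j => hfat Δ ⟨hΔ0, hΔΔ₁⟩ (P' j) (hP'ne j) (hP'd j)
        refine ⟨N, W, ?_, fun j => ⟨hW2 j, hW3 j⟩, ?_⟩
        · intro u hu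
          obtain ⟨j, hj⟩ := Set.mem_iUnion.1 (hPc hu)
          refine Set.mem_iUnion.2 ⟨j, hW1 j ?_⟩
          rw [hP']; dsimp only
          rw [if_pos ⟨u, hj⟩]; exact hj
        · have hsumW : ∑ j : Fin N, Metric.diam (W j) ^ t ≤ (N:ℝ) * Δ ^ t := by
            calc ∑ j : Fin N, Metric.diam (W j) ^ t ≤ ∑ _j : Fin N, Δ ^ t :=
                  Finset.sum_le_sum fun j _ =>
                    Real.rpow_le_rpow Metric.diam_nonneg (hW3 j) ht0
            _ = (N:ℝ) * Δ ^ t := by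
                  rw [Finset.sum_const, Finset.card_univ, Fintype.card_fin, nsmul_eq_mul]
          have halg : C * (2 * Metric.diam (U i) / Δ) ^ α * Δ ^ t
              = C * 2^α * Metric.diam (U i) ^ α * Δ^(t-α) := by
            rw [Real.div_rpow (by have := (hdpos i).le; positivity) hΔ0.le,
              Real.mul_rpow (by norm_num) (hdpos i).le, Real.rpow_sub hΔ0]
            ring
          have : (N:ℝ) * Δ ^ t ≤ C * 2^α * Metric.diam (U i) ^ α * Δ^(t-α) := by
            rw [← halg]
            exact mul_le_mul_of_nonneg_right hPb (Real.rpow_nonneg hΔ0.le _)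
          refine le_trans hsumW (le_trans this ?_)
          linarith
    · -- U i misses F: cover (trivially) with one fattened point
      obtain ⟨W, hW1, hW2, hW3, hW4⟩ := hfat Δ ⟨hΔ0, hΔΔ₁⟩ {x₀} ⟨x₀, rfl⟩
        (by rw [Metric.diam_singleton]; exact hΔ0.le)
      refine ⟨1, fun _ => W, ?_, fun j => ⟨hW2, hW3⟩, ?_⟩
      · intro u hu; exact absurd ⟨u, hu⟩ hUF
      · rw [Finset.sum_const, Finset.card_univ, Fintype.card_fin, one_nsmul]
        have h0 : Metric.diam W ≤ max (Metric.diam (U i)) ((1+1/c) * Δ^(1/φ)) := by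
          refine le_trans hW4 ?_
          rw [Metric.diam_singleton]
          exact max_le_max Metric.diam_nonneg le_rfl
        have := hmaxb W h0
        linarith
  choose k V hV1 hV2 hV3 using key
  refine coverSum_of_fintype (I := Σ i : Fin n, Fin (k i)) (fun x => V x.1 x.2) ?_
    (fun x => hV2 x.1 x.2) ?_
  · intro x hx
    obtain ⟨i, hi⟩ := Set.mem_iUnion.1 (hc hx)
    obtain ⟨j, hj⟩ := Set.mem_iUnion.1 (hV1 i ⟨hi, hx⟩)
    exact Set.mem_iUnion.2 ⟨⟨i, j⟩, hj⟩
  · -- the sum bound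
    have hcount : (n:ℝ) * δ ^ (s/θ) ≤ ε'/K := by
      have h1 : ∀ i : Fin n, δ ^ (s/θ) ≤ Metric.diam (U i) ^ s := by
        intro i
        calc δ ^ (s/θ) = (δ ^ (1/θ)) ^ s := by
              rw [← Real.rpow_mul hδ0.le]; ring_nf
        _ ≤ Metric.diam (U i) ^ s :=
              Real.rpow_le_rpow (Real.rpow_nonneg hδ0.le _) (hd i).1 hs0
      calc (n:ℝ) * δ ^ (s/θ) = ∑ _i : Fin n, δ ^ (s/θ) := by
            rw [Finset.sum_const, Finset.card_univ, Fintype.card_fin, nsmul_eq_mul]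
      _ ≤ ∑ i, Metric.diam (U i) ^ s := Finset.sum_le_sum fun i _ => h1 i
      _ ≤ ε'/K := hsum
    have hT1 : ∑ i, Metric.diam (U i) ^ t ≤ ε'/K := by
      refine le_trans (Finset.sum_le_sum fun i _ => ?_) hsum
      exact Real.rpow_le_rpow_of_exponent_ge (hdpos i)
        (le_trans (hdle i) hδ1.le) hts
    have hδsθ : δ ^ (s/θ) = Δ ^ (m * (s/θ)) := by
      rw [hδdef, ← Real.rpow_mul hΔ0.le]
    have hT2 : (n:ℝ) * (κ * Δ^(t/φ)) ≤ κ * (ε'/K) := by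
      have hexp : m * (s/θ) ≤ t/φ := by
        rw [show m * (s/θ) = (m*s)/θ by ring, div_le_div_iff₀ hθ0 hφ0]
        linarith
      have h5 : Δ^(t/φ) ≤ δ^(s/θ) := by
        rw [hδsθ]
        calc Δ^(t/φ) = Δ^(m*(s/θ)) * Δ^(t/φ - m*(s/θ)) := by
              rw [← Real.rpow_add hΔ0]; ring_nf
        _ ≤ Δ^(m*(s/θ)) * 1 := by
              apply mul_le_mul_of_nonneg_left
                (Real.rpow_le_one hΔ0.le hΔ1.le (by linarith))
                (Real.rpow_nonneg hΔ0.le _)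
        _ = Δ^(m*(s/θ)) := mul_one _
      calc (n:ℝ) * (κ * Δ^(t/φ)) ≤ (n:ℝ) * (κ * δ^(s/θ)) := by
            apply mul_le_mul_of_nonneg_left
              (mul_le_mul_of_nonneg_left h5 hκ0.le) (Nat.cast_nonneg n)
      _ = κ * ((n:ℝ) * δ^(s/θ)) := by ring
      _ ≤ κ * (ε'/K) := mul_le_mul_of_nonneg_left hcount hκ0.le
    have hT3 : ∑ i, C * 2^α * Metric.diam (U i) ^ α * Δ^(t-α)
        ≤ C * 2^α * (ε'/K) := by
      have hdα : ∀ i : Fin n, Metric.diam (U i) ^ α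
          ≤ Metric.diam (U i) ^ s * δ^(α-s) := by
        intro i
        calc Metric.diam (U i) ^ α
            = Metric.diam (U i) ^ s * Metric.diam (U i) ^ (α-s) := by
              rw [← Real.rpow_add (hdpos i)]; ring_nf
        _ ≤ Metric.diam (U i) ^ s * δ^(α-s) := by
              apply mul_le_mul_of_nonneg_left
                (Real.rpow_le_rpow Metric.diam_nonneg (hdle i) (by linarith))
                (Real.rpow_nonneg Metric.diam_nonneg _)
      have hsumα : ∑ i, Metric.diam (U i) ^ α ≤ δ^(α-s) * (ε'/K) := by
        calc ∑ i, Metric.diam (U i) ^ α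
            ≤ ∑ i, Metric.diam (U i) ^ s * δ^(α-s) :=
              Finset.sum_le_sum fun i _ => hdα i
        _ = (∑ i, Metric.diam (U i) ^ s) * δ^(α-s) := by rw [← Finset.sum_mul]
        _ ≤ (ε'/K) * δ^(α-s) :=
              mul_le_mul_of_nonneg_right hsum (Real.rpow_nonneg hδ0.le _)
        _ = δ^(α-s) * (ε'/K) := by ring
      have hΔsmall : Δ^(t-α) * δ^(α-s) ≤ 1 := by
        have : δ^(α-s) = Δ^(m*(α-s)) := by rw [hδdef, ← Real.rpow_mul hΔ0.le]
        rw [this, ← Real.rpow_add hΔ0]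
        exact Real.rpow_le_one hΔ0.le hΔ1.le (by linarith)
      calc ∑ i, C * 2^α * Metric.diam (U i) ^ α * Δ^(t-α)
          = ∑ i, (C * 2^α * Δ^(t-α)) * Metric.diam (U i) ^ α := by
            apply Finset.sum_congr rfl; intros; ring
      _ = (C * 2^α * Δ^(t-α)) * ∑ i, Metric.diam (U i) ^ α := by
            rw [Finset.mul_sum]
      _ ≤ (C * 2^α * Δ^(t-α)) * (δ^(α-s) * (ε'/K)) := by
            apply mul_le_mul_of_nonneg_left hsumα
            have := Real.rpow_nonneg hΔ0.le (t-α); positivity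
      _ = (C * 2^α * (ε'/K)) * (Δ^(t-α) * δ^(α-s)) := by ring
      _ ≤ (C * 2^α * (ε'/K)) * 1 := by
            apply mul_le_mul_of_nonneg_left hΔsmall (by positivity)
      _ = C * 2^α * (ε'/K) := mul_one _
    calc ∑ x : Σ i : Fin n, Fin (k i), Metric.diam (V x.1 x.2) ^ t
        = ∑ i : Fin n, ∑ j : Fin (k i), Metric.diam (V i j) ^ t := by
          rw [← Finset.univ_sigma_univ, Finset.sum_sigma]
    _ ≤ ∑ i : Fin n, (Metric.diam (U i) ^ t + κ * Δ^(t/φ)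
          + C * 2^α * Metric.diam (U i) ^ α * Δ^(t-α)) :=
          Finset.sum_le_sum fun i _ => hV3 i
    _ = (∑ i, Metric.diam (U i) ^ t) + (n:ℝ) * (κ * Δ^(t/φ))
          + ∑ i, C * 2^α * Metric.diam (U i) ^ α * Δ^(t-α) := by
          rw [Finset.sum_add_distrib, Finset.sum_add_distrib, Finset.sum_const,
            Finset.card_univ, Fintype.card_fin, nsmul_eq_mul]
    _ ≤ ε'/K + κ * (ε'/K) + C * 2^α * (ε'/K) := by linarith
    _ = ε' := by
          rw [hKdef]
          field_simp

end Transfer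
section Box

variable {X : Type*} [MetricSpace X]

lemma coverNum_le_of_fintype {S : Set X} {δ : ℝ} {I : Type} [Fintype I] (U : I → Set X)
    (hc : S ⊆ ⋃ i, U i) (hd : ∀ i, Metric.diam (U i) ≤ δ) :
    coverNum S δ ≤ Fintype.card I := by
  refine coverNum_le_card (fun j => U ((Fintype.equivFin I).symm j)) ?_ (fun j => hd _)
  rw [(Fintype.equivFin I).symm.surjective.iUnion_comp (fun i => U i)]
  exact hc

lemma upperBoxDim_le_of_coverNum {F : Set X} {t K : ℝ} (hK : 1 ≤ K) (ht : 0 ≤ t)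
    (h : ∀ᶠ Δ in nhdsWithin (0:ℝ) (Set.Ioi 0), (coverNum F Δ : ℝ) ≤ K * Δ^(-t)) :
    upperBoxDim F ≤ t := by
  have hG : 0 ≤ Real.log K := Real.log_nonneg hK
  refine le_of_forall_gt_imp_ge_of_dense fun b hb => ?_
  have hbt : 0 < b - t := by linarith
  have hx0 : 0 < Real.exp (-(Real.log K/(b-t))) := Real.exp_pos _
  have hev : ∀ᶠ Δ in nhdsWithin (0:ℝ) (Set.Ioi 0),
      Real.log (coverNum F Δ) / -Real.log Δ ≤ b := by
    have hmem : ∀ᶠ Δ in nhdsWithin (0:ℝ) (Set.Ioi 0),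
        Δ < min 1 (Real.exp (-(Real.log K/(b-t)))) :=
      (gt_mem_nhds (lt_min one_pos hx0)).filter_mono nhdsWithin_le_nhds
    filter_upwards [h, hmem, self_mem_nhdsWithin] with Δ hΔb hΔs hΔ0'
    have hΔ0 : 0 < Δ := hΔ0'
    have hΔ1 : Δ < 1 := lt_of_lt_of_le hΔs (min_le_left _ _)
    have hL : 0 < -Real.log Δ := by
      have := Real.log_neg hΔ0 hΔ1; linarith
    have hLb : Real.log K ≤ (b - t) * -Real.log Δ := by
      have hΔe : Δ < Real.exp (-(Real.log K/(b-t))) :=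
        lt_of_lt_of_le hΔs (min_le_right _ _)
      have := Real.log_lt_log hΔ0 hΔe
      rw [Real.log_exp] at this
      have h2 : Real.log K/(b-t) < -Real.log Δ := by linarith
      calc Real.log K = (Real.log K/(b-t)) * (b-t) := by field_simp
      _ ≤ -Real.log Δ * (b-t) := by
            apply mul_le_mul_of_nonneg_right h2.le hbt.le
      _ = (b - t) * -Real.log Δ := by ring
    rcases Nat.eq_zero_or_pos (coverNum F Δ) with hN | hN
    · rw [hN, Nat.cast_zero, Real.log_zero, zero_div]
      linarith
    · have hN1 : (1:ℝ) ≤ (coverNum F Δ : ℝ) := by exact_mod_cast hN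
      have hlog : Real.log (coverNum F Δ) ≤ Real.log K + t * -Real.log Δ := by
        calc Real.log (coverNum F Δ) ≤ Real.log (K * Δ^(-t)) :=
              Real.log_le_log (by linarith) hΔb
        _ = Real.log K + Real.log (Δ^(-t)) := by
              rw [Real.log_mul (by linarith) (ne_of_gt (Real.rpow_pos_of_pos hΔ0 _))]
        _ = Real.log K + t * -Real.log Δ := by
              rw [Real.log_rpow hΔ0]; ring
      calc Real.log (coverNum F Δ) / -Real.log Δ
          ≤ (Real.log K + t * -Real.log Δ) / -Real.log Δ := by gcongr
      _ = Real.log K / -Real.log Δ + t := by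
            rw [add_div, mul_div_assoc, div_self (ne_of_gt hL), mul_one]
      _ ≤ (b - t) + t := by
            have : Real.log K / -Real.log Δ ≤ b - t := (div_le_iff₀ hL).2 hLb
            linarith
      _ = b := by ring
  have hpos : ∀ᶠ Δ in nhdsWithin (0:ℝ) (Set.Ioi 0),
      (0:ℝ) ≤ Real.log (coverNum F Δ) / -Real.log Δ := by
    have hmem1 : ∀ᶠ Δ in nhdsWithin (0:ℝ) (Set.Ioi 0), Δ < 1 :=
      (gt_mem_nhds one_pos).filter_mono nhdsWithin_le_nhds
    filter_upwards [hmem1, self_mem_nhdsWithin] with Δ hΔ1 hΔ0'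
    have hΔ0 : (0:ℝ) < Δ := hΔ0'
    have hL : 0 < -Real.log Δ := by
      have := Real.log_neg hΔ0 hΔ1; linarith
    exact div_nonneg (Real.log_natCast_nonneg _) hL.le
  exact Filter.limsup_le_of_le
    (Filter.isCoboundedUnder_le_of_eventually_le _ hpos) hev

end Box
section BoxTransfer

variable {X : Type*} [MetricSpace X]

lemma transfer_box (hbX : Bornology.IsBounded (Set.univ : Set X))
    {F : Set X} (hTB : TotallyBounded F)
    {C α : ℝ} (hC : 0 < C)
    (hb : ∀ x ∈ F, ∀ r R : ℝ, 0 < r → r < R →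
      (coverNum (Metric.ball x R ∩ F) r : ℝ) ≤ C * (R / r) ^ α)
    {θ s t m : ℝ} (hθ0 : 0 < θ) (hθ1 : θ < 1)
    (hm0 : 0 < m) (hm1 : m ≤ 1) (hs0 : 0 ≤ s) (hsα : s ≤ α) (hts : s ≤ t)
    (h2 : m * s ≤ t * θ) (h3 : α - m * (α - s) ≤ t)
    (hsW : s ∈ WSet θ F) : upperBoxDim F ≤ t := by
  have ht0 : 0 ≤ t := le_trans hs0 hts
  have h2α : (0:ℝ) < 2 ^ α := Real.rpow_pos_of_pos two_pos _
  set K : ℝ := 1 + C * 2 ^ α with hKdef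
  have hK1 : 1 ≤ K := by nlinarith
  refine upperBoxDim_le_of_coverNum hK1 ht0 ?_
  obtain ⟨δ₀, hδ₀, hcs⟩ := hsW.2 1 one_pos
  have hδ₀m : (0:ℝ) < δ₀ ^ (1/m) := Real.rpow_pos_of_pos hδ₀.1 _
  apply eventually_of_delta (lt_min one_pos hδ₀m)
  rintro Δ ⟨hΔ0, hΔlt⟩
  have hΔ1 : Δ < 1 := lt_of_lt_of_le hΔlt (min_le_left _ _)
  have hΔδ₀ : Δ < δ₀ ^ (1/m) := lt_of_lt_of_le hΔlt (min_le_right _ _)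
  set δ : ℝ := Δ ^ m with hδdef
  have hδ0 : 0 < δ := Real.rpow_pos_of_pos hΔ0 _
  have hδ1 : δ < 1 := Real.rpow_lt_one hΔ0.le hΔ1 hm0
  have hδδ₀ : δ < δ₀ := by
    calc δ = Δ ^ m := hδdef
    _ < (δ₀ ^ (1/m)) ^ m := Real.rpow_lt_rpow hΔ0.le hΔδ₀ hm0
    _ = δ₀ := by
        rw [← Real.rpow_mul hδ₀.1.le, one_div, inv_mul_cancel₀ hm0.ne', Real.rpow_one]
  obtain ⟨n, U, hc, hd, hsum⟩ := hcs δ ⟨hδ0, hδδ₀⟩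
  have hdpos : ∀ i, 0 < Metric.diam (U i) :=
    fun i => lt_of_lt_of_le (Real.rpow_pos_of_pos hδ0 _) (hd i).1
  have hdle : ∀ i, Metric.diam (U i) ≤ δ := fun i => (hd i).2
  have key : ∀ i : Fin n, ∃ (k : ℕ) (V : Fin k → Set X),
      (U i ∩ F ⊆ ⋃ j, V j) ∧ (∀ j, Metric.diam (V j) ≤ Δ) ∧
      (k : ℝ) ≤ 1 + C * 2^α * Metric.diam (U i) ^ α * Δ^(-α) := by
    intro i
    have hterm : 0 ≤ C * 2^α * Metric.diam (U i) ^ α * Δ^(-α) := by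
      have h1 := Real.rpow_nonneg (Metric.diam_nonneg (s := U i)) α
      have h2' := Real.rpow_nonneg hΔ0.le (-α)
      positivity
    rcases le_or_gt (Metric.diam (U i)) Δ with hsmall | hbig
    · exact ⟨1, fun _ => U i, fun u hu => Set.mem_iUnion.2 ⟨0, hu.1⟩,
        fun j => hsmall, by rw [Nat.cast_one]; linarith⟩
    · by_cases hUF : (U i ∩ F).Nonempty
      · obtain ⟨xU, hxU⟩ := hUF
        obtain ⟨N, P, hPc, hPd, hPb⟩ := chop hbX hTB hb hxU hΔ0 hbig
        refine ⟨N, P, hPc, hPd, ?_⟩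
        have halg : C * (2 * Metric.diam (U i) / Δ) ^ α
            = C * 2^α * Metric.diam (U i) ^ α * Δ^(-α) := by
          rw [Real.div_rpow (by have := (hdpos i).le; positivity) hΔ0.le,
            Real.mul_rpow (by norm_num) (hdpos i).le, Real.rpow_neg hΔ0.le]
          ring
        rw [halg] at hPb
        linarith
      · exact ⟨0, Fin.elim0, fun u hu => absurd ⟨u, hu⟩ hUF, fun j => j.elim0,
          by rw [Nat.cast_zero]; linarith⟩
  choose k V hV1 hV2 hV3 using key
  have hcov : F ⊆ ⋃ x : Σ i : Fin n, Fin (k i), V x.1 x.2 := by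
    intro x hx
    obtain ⟨i, hi⟩ := Set.mem_iUnion.1 (hc hx)
    obtain ⟨j, hj⟩ := Set.mem_iUnion.1 (hV1 i ⟨hi, hx⟩)
    exact Set.mem_iUnion.2 ⟨⟨i, j⟩, hj⟩
  have hcard : coverNum F Δ ≤ Fintype.card (Σ i : Fin n, Fin (k i)) :=
    coverNum_le_of_fintype _ hcov (fun x => hV2 x.1 x.2)
  have hcount : (n:ℝ) * δ ^ (s/θ) ≤ 1 := by
    have h1 : ∀ i : Fin n, δ ^ (s/θ) ≤ Metric.diam (U i) ^ s := by
      intro i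
      calc δ ^ (s/θ) = (δ ^ (1/θ)) ^ s := by
            rw [← Real.rpow_mul hδ0.le]; ring_nf
      _ ≤ Metric.diam (U i) ^ s :=
            Real.rpow_le_rpow (Real.rpow_nonneg hδ0.le _) (hd i).1 hs0
    calc (n:ℝ) * δ ^ (s/θ) = ∑ _i : Fin n, δ ^ (s/θ) := by
          rw [Finset.sum_const, Finset.card_univ, Fintype.card_fin, nsmul_eq_mul]
    _ ≤ ∑ i, Metric.diam (U i) ^ s := Finset.sum_le_sum fun i _ => h1 i
    _ ≤ 1 := hsum
  have hn : (n:ℝ) ≤ Δ ^ (-t) := by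
    have hδs : 0 < δ ^ (s/θ) := Real.rpow_pos_of_pos hδ0 _
    have h1 : (n:ℝ) ≤ (δ ^ (s/θ))⁻¹ := by
      rw [← one_div, le_div_iff₀ hδs]
      exact hcount
    refine le_trans h1 ?_
    have h2' : (δ ^ (s/θ))⁻¹ = Δ ^ (-(m * (s/θ))) := by
      rw [hδdef, ← Real.rpow_mul hΔ0.le, ← Real.rpow_neg hΔ0.le]
    rw [h2']
    apply Real.rpow_le_rpow_of_exponent_ge hΔ0 hΔ1.le
    have : m * (s/θ) ≤ t := by
      rw [show m * (s/θ) = (m*s)/θ by ring, div_le_iff₀ hθ0]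
      linarith
    linarith
  have hsumα : ∑ i, Metric.diam (U i) ^ α ≤ δ^(α-s) := by
    have hdα : ∀ i : Fin n, Metric.diam (U i) ^ α
        ≤ Metric.diam (U i) ^ s * δ^(α-s) := by
      intro i
      calc Metric.diam (U i) ^ α
          = Metric.diam (U i) ^ s * Metric.diam (U i) ^ (α-s) := by
            rw [← Real.rpow_add (hdpos i)]; ring_nf
      _ ≤ Metric.diam (U i) ^ s * δ^(α-s) := by
            apply mul_le_mul_of_nonneg_left
              (Real.rpow_le_rpow Metric.diam_nonneg (hdle i) (by linarith))
              (Real.rpow_nonneg Metric.diam_nonneg _)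
    calc ∑ i, Metric.diam (U i) ^ α
        ≤ ∑ i, Metric.diam (U i) ^ s * δ^(α-s) := Finset.sum_le_sum fun i _ => hdα i
    _ = (∑ i, Metric.diam (U i) ^ s) * δ^(α-s) := by rw [← Finset.sum_mul]
    _ ≤ 1 * δ^(α-s) := mul_le_mul_of_nonneg_right hsum (Real.rpow_nonneg hδ0.le _)
    _ = δ^(α-s) := one_mul _
  have hΔe : Δ^(-α) * δ^(α-s) ≤ Δ^(-t) := by
    have hδas : δ^(α-s) = Δ^(m*(α-s)) := by rw [hδdef, ← Real.rpow_mul hΔ0.le]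
    rw [hδas, ← Real.rpow_add hΔ0]
    apply Real.rpow_le_rpow_of_exponent_ge hΔ0 hΔ1.le
    linarith
  calc (coverNum F Δ : ℝ) ≤ (Fintype.card (Σ i : Fin n, Fin (k i)) : ℝ) := by
        exact_mod_cast hcard
  _ = ∑ i : Fin n, (k i : ℝ) := by
        rw [Fintype.card_sigma]
        push_cast
        simp
  _ ≤ ∑ i : Fin n, (1 + C * 2^α * Metric.diam (U i) ^ α * Δ^(-α)) :=
        Finset.sum_le_sum fun i _ => hV3 i
  _ = (n:ℝ) + C * 2^α * Δ^(-α) * ∑ i, Metric.diam (U i) ^ α := by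
        rw [Finset.sum_add_distrib, Finset.sum_const, Finset.card_univ,
          Fintype.card_fin, nsmul_eq_mul, mul_one, Finset.mul_sum]
        congr 1
        apply Finset.sum_congr rfl; intros; ring
  _ ≤ Δ^(-t) + C * 2^α * Δ^(-α) * δ^(α-s) := by
        have hmul : C * 2^α * Δ^(-α) * ∑ i, Metric.diam (U i) ^ α
            ≤ C * 2^α * Δ^(-α) * δ^(α-s) := by
          apply mul_le_mul_of_nonneg_left hsumα
          have := Real.rpow_nonneg hΔ0.le (-α)
          positivity
        linarith
  _ ≤ Δ^(-t) + C * 2^α * Δ^(-t) := by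
        have : C * 2^α * Δ^(-α) * δ^(α-s) = C * 2^α * (Δ^(-α) * δ^(α-s)) := by ring
        rw [this]
        have := mul_le_mul_of_nonneg_left hΔe (le_of_lt (by positivity : (0:ℝ) < C * 2^α))
        linarith
  _ = K * Δ^(-t) := by rw [hKdef]; ring

end BoxTransfer
set_option maxHeartbeats 1000000 in
theorem stmt9 {X : Type*} [MetricSpace X] [Nontrivial X] (hX : UniformlyPerfect X)
    (F : Set X) (hne : F.Nonempty) (hTB : TotallyBounded F)
    (hAfin : ∃ α, IsAssouadBound F α) (hApos : 0 < assouadDim F)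
    (hB : 0 < upperBoxDim F) :
    ∀ θ φ : ℝ, 0 < θ → θ < φ → φ ≤ 1 →
      upperThetaDim φ F / φ < upperThetaDim θ F / θ := by
  intro θ φ hθ0 hθφ hφ1
  have hθ1 : θ < 1 := lt_of_lt_of_le hθφ hφ1
  have hφ0 : 0 < φ := hθ0.trans hθφ
  have hbX : Bornology.IsBounded (Set.univ : Set X) := bounded_of_upperBoxDim_pos hB
  obtain ⟨c, hc0, hc1, hup⟩ := hX
  obtain ⟨α₀, hA₀⟩ := hAfin
  obtain ⟨hα₀0, C₀, hC₀, hb₀⟩ := hA₀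
  have hdθeq : upperThetaDim θ F = sInf (WSet θ F) := by
    rw [upperThetaDim, if_neg (ne_of_gt hθ0), if_neg (ne_of_lt hθ1), upperPhiDim_eq_sInf]
  set dθ := sInf (WSet θ F) with hdθ
  have hWne : (WSet θ F).Nonempty :=
    ⟨α₀ + 1, WSet_nonempty hbX hc0 hc1 hup hne hTB hα₀0 hC₀ hb₀ hθ0 hθ1⟩
  have hdθ0 : 0 ≤ dθ := sInf_WSet_nonneg hWne
  set A := max α₀ (dθ + 1) with hA
  have hAass : IsAssouadBound F A :=
    IsAssouadBound.mono ⟨hα₀0, C₀, hC₀, hb₀⟩ (le_max_left _ _)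
  obtain ⟨hA0', C, hC, hbA⟩ := hAass
  have hA1 : dθ + 1 ≤ A := le_max_right _ _
  have hA0 : 0 < A := lt_of_lt_of_le (by linarith) hA1
  clear_value dθ A
  -- positivity of the θ-intermediate dimension
  have hdθpos : 0 < dθ := by
    by_contra h
    push_neg at h
    have hdθz : dθ = 0 := le_antisymm h hdθ0
    have hBle : ∀ η : ℝ, 0 < η → η ≤ 1 → upperBoxDim F ≤ η / θ := by
      intro η hη0 hη1
      have hηW : η ∈ WSet θ F := mem_WSet_of_lt hWne (by rw [← hdθ, hdθz]; exact hη0)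
      have hts : η ≤ η / θ := by
        rw [le_div_iff₀ hθ0]
        nlinarith
      refine transfer_box hbX hTB hC hbA hθ0 hθ1 one_pos le_rfl hη0.le
        (by linarith) hts ?_ ?_ hηW
      · rw [div_mul_cancel₀ _ (ne_of_gt hθ0), one_mul]
      · rw [one_mul]
        linarith
    set β := upperBoxDim F with hβ
    have h1 := hBle (min 1 (θ * β / 2)) (lt_min one_pos (by positivity)) (min_le_left _ _)
    have h2 : min 1 (θ * β / 2) / θ ≤ β / 2 := by
      rw [div_le_iff₀ hθ0]
      calc min 1 (θ * β / 2) ≤ θ * β / 2 := min_le_right _ _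
      _ = β / 2 * θ := by ring
    linarith
  -- the quantitative choice of parameters
  set η := min 1 (dθ ^ 2 * (φ - θ) / (2 * θ * A)) with hη
  have hη0 : 0 < η := by
    apply lt_min one_pos
    have : 0 < φ - θ := by linarith
    positivity
  have hη1 : η ≤ 1 := min_le_left _ _
  set s := dθ + η with hs
  have hsW : s ∈ WSet θ F := mem_WSet_of_lt hWne (by rw [← hdθ, hs]; linarith)
  have hs0 : 0 ≤ s := by rw [hs]; linarith
  have hsA : s ≤ A := by rw [hs]; linarith
  set D := θ * A + (φ - θ) * s with hD
  have hD0 : 0 < D := by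
    rw [hD]
    have h1 : 0 < θ * A := by positivity
    nlinarith
  set m := A * θ / D with hm
  set t := s * φ * A / D with ht
  have hηle : η ≤ dθ ^ 2 * (φ - θ) / (2 * θ * A) := min_le_right _ _
  clear_value η s D m t
  have hm0 : 0 < m := by rw [hm]; positivity
  have hDne : D ≠ 0 := ne_of_gt hD0
  have hm1 : m ≤ 1 := by
    rw [hm, div_le_one hD0, hD]
    nlinarith [mul_nonneg (by linarith : (0:ℝ) ≤ φ - θ) hs0]
  have hts : s ≤ t := by
    rw [ht, le_div_iff₀ hD0, hD]
    nlinarith [mul_nonneg (mul_nonneg hs0 (by linarith : (0:ℝ) ≤ φ - θ))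
      (by linarith : (0:ℝ) ≤ A - s)]
  have h2 : m * s * φ ≤ t * θ := by
    apply le_of_eq
    rw [hm, ht]
    field_simp
  have h3 : A - m * (A - s) ≤ t := by
    apply le_of_eq
    rw [hm, ht]
    field_simp
    rw [hD]
    ring
  have hkey : t < φ * dθ / θ := by
    have hstep : θ * A * η < dθ * (φ - θ) * s := by
      have h1 : θ * A * η ≤ θ * A * (dθ ^ 2 * (φ - θ) / (2 * θ * A)) :=
        mul_le_mul_of_nonneg_left hηle (by positivity)
      have h2' : θ * A * (dθ ^ 2 * (φ - θ) / (2 * θ * A)) = dθ ^ 2 * (φ - θ) / 2 := by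
        field_simp
      have h3' : dθ ^ 2 * (φ - θ) / 2 < dθ ^ 2 * (φ - θ) := by
        have : 0 < dθ ^ 2 * (φ - θ) := by
          have : 0 < φ - θ := by linarith
          positivity
        linarith
      have h4 : dθ ^ 2 * (φ - θ) ≤ dθ * (φ - θ) * s := by
        rw [hs]
        nlinarith
      linarith
    rw [ht, div_lt_div_iff₀ hD0 hθ0, hD]
    have hstep' := mul_lt_mul_of_pos_left hstep hφ0
    rw [hs] at hstep' ⊢
    nlinarith [hstep']
  -- conclude
  rcases eq_or_lt_of_le hφ1 with hφeq | hφlt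
  · subst hφeq
    have hbox : upperBoxDim F ≤ t := by
      refine transfer_box hbX hTB hC hbA hθ0 hθ1 hm0 hm1 hs0 hsA hts ?_ h3 hsW
      rw [← mul_one (m * s)]
      exact h2
    have hbt : upperThetaDim 1 F = upperBoxDim F := by
      rw [upperThetaDim, if_neg one_ne_zero, if_pos rfl]
    rw [hbt, hdθeq, div_one]
    calc upperBoxDim F ≤ t := hbox
    _ < 1 * dθ / θ := hkey
    _ = dθ / θ := by rw [one_mul]
  · have htW : t ∈ WSet φ F :=
      transfer_lt_one hbX hc0 hc1 hup hne hTB hC hbA hθ0 hθφ hφlt hm0 hm1 hs0 hsA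
        hts h2 h3 hsW
    have hdφ : upperThetaDim φ F ≤ t := by
      rw [upperThetaDim, if_neg (ne_of_gt hφ0), if_neg (ne_of_lt hφlt), upperPhiDim_eq_sInf]
      exact csInf_le ⟨0, fun x hx => hx.1⟩ htW
    rw [hdθeq]
    have hstep : upperThetaDim φ F / φ ≤ t / φ := by gcongr
    have hstep2 : t / φ < dθ / θ := by
      rw [div_lt_div_iff₀ hφ0 hθ0]
      have := hkey
      rw [lt_div_iff₀ hθ0] at this
      nlinarith [this]
    linarith
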